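/- Let X = ℕ and let μ be the generalized topology generated by the base β = {{n, n+1} : n ∈ ℕ} (i.e., μ consists of ∅ and all unions of members of β). Then (X, μ) is nearly μ-paracompact but not nearly μ-compact; in particular, the family {{n, n+1} : n odd} is a μ-regular open cover of X with no finite subcover. -/

import Mathlib

open Set

/-- `μ` is a generalized topology on `X`: contains `∅` and closed under arbitrary unions. -/
def IsGT {X : Type} (μ : Set (Set X)) : Prop :=
  ∅ ∈ μ ∧ ∀ S ⊆ μ, ⋃₀ S ∈ μ

/-- μ-interior: union of all μ-open subsets of `A`. -/
def gInt {X : Type} (μ : Set (Set X)) (A : Set X) : Set X :=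
  ⋃₀ {V | V ∈ μ ∧ V ⊆ A}

/-- μ-closure: intersection of all μ-closed supersets of `A`. -/
def gCl {X : Type} (μ : Set (Set X)) (A : Set X) : Set X :=
  ⋂₀ {F | Fᶜ ∈ μ ∧ A ⊆ F}

/-- `A` is μ-regular open. -/
def RegOpen {X : Type} (μ : Set (Set X)) (A : Set X) : Prop :=
  A = gInt μ (gCl μ A)

/-- `A` is μ-regular closed. -/
def RegClosed {X : Type} (μ : Set (Set X)) (A : Set X) : Prop :=
  A = gCl μ (gInt μ A)

/-- Nearly μ-compact: every cover by μ-regular open sets has a finite subcover. -/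
def NearlyCompact {X : Type} (μ : Set (Set X)) : Prop :=
  ∀ C : Set (Set X), (∀ A ∈ C, RegOpen μ A) → ⋃₀ C = univ →
    ∃ t : Finset (Set X), ↑t ⊆ C ∧ ⋃₀ (t : Set (Set X)) = univ

def LocallyFiniteFam {X : Type} (μ : Set (Set X)) (ξ : Set (Set X)) : Prop :=
  ∀ x : X, ∃ V ∈ μ, x ∈ V ∧ {U ∈ ξ | (U ∩ V).Nonempty}.Finite

def NearlyParacompact {X : Type} (μ : Set (Set X)) : Prop :=
  ∀ C : Set (Set X), (∀ A ∈ C, RegOpen μ A) → ⋃₀ C = univ →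
    ∃ η : Set (Set X), (∀ U ∈ η, U ∈ μ) ∧ ⋃₀ η = univ ∧
      (∀ U ∈ η, ∃ V ∈ C, U ⊆ V) ∧ LocallyFiniteFam μ η

/-- The GT on the positive integers generated by the base of sets {n, n+1}. -/
def muEx10 : Set (Set ℕ+) :=
  {A | ∃ S : Set (Set ℕ+), (∀ B ∈ S, ∃ n : ℕ+, B = {n, n + 1}) ∧ A = ⋃₀ S}

/-- The cover by the sets {n, n+1} with n odd. -/
def oddCover : Set (Set ℕ+) :=
  {A | ∃ n : ℕ+, Odd (n : ℕ) ∧ A = {n, n + 1}}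

lemma pnat_add_one_coe (n : ℕ+) : ((n + 1 : ℕ+) : ℕ) = (n : ℕ) + 1 := by
  rw [PNat.add_coe, PNat.one_coe]

lemma mem_pair_iff {w n : ℕ+} :
    w ∈ ({n, n + 1} : Set ℕ+) ↔ (w : ℕ) = (n : ℕ) ∨ (w : ℕ) = (n : ℕ) + 1 := by
  simp only [mem_insert_iff, mem_singleton_iff]
  constructor
  · rintro (rfl | rfl)
    · exact Or.inl rfl
    · exact Or.inr (pnat_add_one_coe n)
  · rintro (h | h)
    · exact Or.inl (PNat.coe_injective h)
    · exact Or.inr (PNat.coe_injective (by rw [h, pnat_add_one_coe]))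

lemma pair_mem_mu (n : ℕ+) : ({n, n + 1} : Set ℕ+) ∈ muEx10 :=
  ⟨{{n, n + 1}}, by rintro B rfl; exact ⟨n, rfl⟩, by rw [sUnion_singleton]⟩

lemma mem_mu_iff {A : Set ℕ+} : A ∈ muEx10 ↔
    ∀ x ∈ A, ∃ n : ℕ+, x ∈ ({n, n + 1} : Set ℕ+) ∧ ({n, n + 1} : Set ℕ+) ⊆ A := by
  constructor
  · rintro ⟨S, hS, rfl⟩ x hx
    obtain ⟨B, hB, hxB⟩ := hx
    obtain ⟨n, rfl⟩ := hS B hB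
    exact ⟨n, hxB, fun y hy => ⟨_, hB, hy⟩⟩
  · intro h
    refine ⟨{B | (∃ n : ℕ+, B = {n, n + 1}) ∧ B ⊆ A}, fun B hB => hB.1, ?_⟩
    ext x
    constructor
    · intro hx
      obtain ⟨n, hxn, hsub⟩ := h x hx
      exact ⟨{n, n + 1}, ⟨⟨n, rfl⟩, hsub⟩, hxn⟩
    · rintro ⟨B, ⟨_, hsub⟩, hxB⟩
      exact hsub hxB

lemma mu_sUnion {S : Set (Set ℕ+)} (hS : S ⊆ muEx10) : ⋃₀ S ∈ muEx10 := by
  rw [mem_mu_iff]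
  rintro x ⟨B, hB, hxB⟩
  obtain ⟨n, hxn, hsub⟩ := mem_mu_iff.mp (hS hB) x hxB
  exact ⟨n, hxn, hsub.trans (subset_sUnion_of_mem hB)⟩

lemma gInt_mem (A : Set ℕ+) : gInt muEx10 A ∈ muEx10 :=
  mu_sUnion (fun _ hV => hV.1)

lemma gInt_subset (A : Set ℕ+) : gInt muEx10 A ⊆ A :=
  sUnion_subset fun _ hV => hV.2

lemma gInt_of_mem {A : Set ℕ+} (hA : A ∈ muEx10) : gInt muEx10 A = A :=
  subset_antisymm (gInt_subset A) (subset_sUnion_of_mem ⟨hA, subset_rfl⟩)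

lemma gCl_of_closed {A : Set ℕ+} (h : Aᶜ ∈ muEx10) : gCl muEx10 A = A := by
  have hm : A ∈ {F | Fᶜ ∈ muEx10 ∧ A ⊆ F} := ⟨h, subset_rfl⟩
  apply subset_antisymm (sInter_subset_of_mem hm)
  intro x hx
  exact fun F hF => hF.2 hx

lemma regOpen_mem {A : Set ℕ+} (h : RegOpen muEx10 A) : A ∈ muEx10 := by
  rw [h]; exact gInt_mem _

lemma oddPair_compl_open (n : ℕ+) (hn : Odd (n : ℕ)) :
    ({n, n + 1} : Set ℕ+)ᶜ ∈ muEx10 := by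
  rw [mem_mu_iff]
  intro x hx
  rw [mem_compl_iff, mem_pair_iff] at hx
  push_neg at hx
  by_cases h1 : (x : ℕ) + 1 = (n : ℕ)
  · have hxeven : Even (x : ℕ) := by
      rcases Nat.even_or_odd (x : ℕ) with h | h
      · exact h
      · exfalso
        obtain ⟨k, hk⟩ := h
        obtain ⟨j, hj⟩ := hn
        omega
    have hx2le : 2 ≤ (x : ℕ) := by
      have : 0 < (x : ℕ) := x.property
      obtain ⟨k, hk⟩ := hxeven
      omega
    refine ⟨⟨(x : ℕ) - 1, by omega⟩, ?_, ?_⟩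
    · exact mem_pair_iff.mpr (Or.inr (by simp only [PNat.mk_coe]; omega))
    · intro z hz
      replace hz := mem_pair_iff.mp hz
      simp only [PNat.mk_coe] at hz
      rw [mem_compl_iff, mem_pair_iff]
      push_neg
      omega
  · refine ⟨x, mem_pair_iff.mpr (Or.inl rfl), ?_⟩
    intro z hz
    rw [mem_pair_iff] at hz
    rw [mem_compl_iff, mem_pair_iff]
    push_neg
    omega

lemma oddPair_regOpen (n : ℕ+) (hn : Odd (n : ℕ)) :
    RegOpen muEx10 ({n, n + 1} : Set ℕ+) := by
  unfold RegOpen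
  rw [gCl_of_closed (oddPair_compl_open n hn), gInt_of_mem (pair_mem_mu n)]

lemma oddCover_regOpen : ∀ A ∈ oddCover, RegOpen muEx10 A := by
  rintro A ⟨n, hn, rfl⟩
  exact oddPair_regOpen n hn

lemma oddCover_covers : ⋃₀ oddCover = univ := by
  ext m
  simp only [mem_univ, iff_true, mem_sUnion]
  rcases Nat.even_or_odd (m : ℕ) with he | ho
  · have h1 : 0 < (m : ℕ) := m.property
    have h2 : 2 ≤ (m : ℕ) := by
      obtain ⟨k, hk⟩ := he; omega
    refine ⟨_, ⟨⟨(m : ℕ) - 1, by omega⟩, ?_, rfl⟩, ?_⟩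
    · simp only [PNat.mk_coe]
      rw [Nat.odd_iff]
      rw [Nat.even_iff] at he
      omega
    · exact mem_pair_iff.mpr (Or.inr (by simp only [PNat.mk_coe]; omega))
  · exact ⟨{m, m + 1}, ⟨m, ho, rfl⟩, mem_pair_iff.mpr (Or.inl rfl)⟩

lemma no_finite_subcover :
    ¬ ∃ t : Finset (Set ℕ+), ↑t ⊆ oddCover ∧ ⋃₀ (t : Set (Set ℕ+)) = univ := by
  rintro ⟨t, ht, hcov⟩
  have hfin : (⋃₀ (t : Set (Set ℕ+))).Finite := by
    apply Set.Finite.sUnion t.finite_toSet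
    intro A hA
    obtain ⟨n, _, rfl⟩ := ht hA
    exact (Set.finite_singleton _).insert _
  rw [hcov] at hfin
  exact Set.infinite_univ hfin

lemma nearlyPara : NearlyParacompact muEx10 := by
  intro C hreg hcov
  refine ⟨{P | (∃ n : ℕ+, P = {n, n + 1}) ∧ ∃ V ∈ C, P ⊆ V}, ?_, ?_, ?_, ?_⟩
  · rintro U ⟨⟨n, rfl⟩, -⟩
    exact pair_mem_mu n
  · ext x
    simp only [mem_univ, iff_true, mem_sUnion]
    have hx : x ∈ ⋃₀ C := by rw [hcov]; exact mem_univ x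
    obtain ⟨V, hVC, hxV⟩ := hx
    obtain ⟨n, hxn, hsub⟩ := mem_mu_iff.mp (regOpen_mem (hreg V hVC)) x hxV
    exact ⟨{n, n + 1}, ⟨⟨n, rfl⟩, V, hVC, hsub⟩, hxn⟩
  · rintro U ⟨-, V, hVC, hUV⟩
    exact ⟨V, hVC, hUV⟩
  · intro x
    refine ⟨{x, x + 1}, pair_mem_mu x, mem_pair_iff.mpr (Or.inl rfl), ?_⟩
    have hidx : Set.Finite {n : ℕ+ |
        (n : ℕ) = (x : ℕ) ∨ (n : ℕ) = (x : ℕ) + 1 ∨ (n : ℕ) + 1 = (x : ℕ)} := by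
      apply Set.Finite.subset
        (Set.Finite.preimage (f := fun n : ℕ+ => (n : ℕ))
          (fun a _ b _ h => PNat.coe_injective h)
          (((Set.finite_singleton ((x : ℕ) - 1)).insert ((x : ℕ) + 1)).insert (x : ℕ)))
      intro n hn
      simp only [mem_setOf_eq] at hn
      simp only [mem_preimage, mem_insert_iff, mem_singleton_iff]
      omega
    apply Set.Finite.subset (hidx.image (fun n : ℕ+ => ({n, n + 1} : Set ℕ+)))
    rintro U ⟨⟨⟨n, rfl⟩, -⟩, hne⟩
    obtain ⟨y, hy1, hy2⟩ := hne
    rw [mem_pair_iff] at hy1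
    have hy2' := mem_pair_iff.mp hy2
    refine ⟨n, ?_, rfl⟩
    simp only [mem_setOf_eq]
    omega

theorem example10 :
    NearlyParacompact muEx10 ∧ ¬ NearlyCompact muEx10 ∧
    ((∀ A ∈ oddCover, RegOpen muEx10 A) ∧ ⋃₀ oddCover = univ ∧
      ¬ ∃ t : Finset (Set ℕ+), ↑t ⊆ oddCover ∧ ⋃₀ (t : Set (Set ℕ+)) = univ) := by
  exact ⟨nearlyPara,
    fun h => no_finite_subcover (h oddCover oddCover_regOpen oddCover_covers),
    oddCover_regOpen, oddCover_covers, no_finite_subcover⟩
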